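/- The PF-D0 coefficient function b2 satisfies lim_{v→0⁺} b2(v) = −114798419/26611200 and lim_{v→0⁺} (b2(v) − (−114798419/26611200))/v² = 16301796103/29059430400; in particular b2 tends to the corresponding coefficient of the classical Quinlan–Tremaine method as v → 0. -/

import Mathlib

open Filter

/-- The variable coefficient `b₁(v)` of the phase-fitted method PF-D0. -/
noncomputable def pfb1 (v : ℝ) : ℝ :=
  (((-124184636) * Real.cos v + 70378348 * Real.cos (2 * v) - 24862148 * Real.cos (3 * v)
        + 5153611 * Real.cos (4 * v)) * v ^ 2
      + 25 * (3013169 * v ^ 2 - 16128 * Real.cos (3 * v) + 32256 * Real.cos (4 * v)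
        - 32256 * Real.cos (5 * v) + 16128 * Real.cos (6 * v)))
    / (206438400 * v ^ 2 * (Real.sin (v / 2)) ^ 10)

/-- The variable coefficient `b₂(v)` of the phase-fitted method PF-D0. -/
noncomputable def pfb2 (v : ℝ) : ℝ :=
  (v ^ 2 * (159588050 * Real.cos v - 85350160 * Real.cos (2 * v)
        + 16708985 * Real.cos (3 * v) - 5153611 * Real.cos (5 * v))
      - 16 * (6496079 * v ^ 2 - 252000 * Real.cos (3 * v) + 504000 * Real.cos (4 * v)
        - 504000 * Real.cos (5 * v) + 252000 * Real.cos (6 * v)))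
    / (206438400 * v ^ 2 * (Real.sin (v / 2)) ^ 10)

/-- The variable coefficient `b₃(v)` of the phase-fitted method PF-D0. -/
noncomputable def pfb3 (v : ℝ) : ℝ :=
  (((-367257540) * Real.cos v + 183567900 * Real.cos (2 * v)
        - 16708985 * Real.cos (4 * v) + 24862148 * Real.cos (5 * v)) * v ^ 2
      + 81 * (3175117 * v ^ 2 - 224000 * Real.cos (3 * v) + 448000 * Real.cos (4 * v)
        - 448000 * Real.cos (5 * v) + 224000 * Real.cos (6 * v)))
    / (206438400 * v ^ 2 * (Real.sin (v / 2)) ^ 10)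

/-- The variable coefficient `b₄(v)` of the phase-fitted method PF-D0. -/
noncomputable def pfb4 (v : ℝ) : ℝ :=
  (30675810 * v ^ 2 * Real.cos v - 42958788 * v ^ 2
      + 75 * (161280 - 611893 * v ^ 2) * Real.cos (3 * v)
      + 140 * (152411 * v ^ 2 - 172800) * Real.cos (4 * v)
      + (24192000 - 17594587 * v ^ 2) * Real.cos (5 * v)
      - 12096000 * Real.cos (6 * v))
    / (51609600 * v ^ 2 * (Real.sin (v / 2)) ^ 10)

/-- The variable coefficient `b₅(v)` of the phase-fitted method PF-D0. -/
noncomputable def pfb5 (v : ℝ) : ℝ :=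
  ((-61351620) * v ^ 2 * Real.cos (2 * v) + 85936557 * v ^ 2
      + 30 * (6120959 * v ^ 2 - 1411200) * Real.cos (3 * v)
      + 25 * (3386880 - 3191761 * v ^ 2) * Real.cos (4 * v)
      + (62092318 * v ^ 2 - 84672000) * Real.cos (5 * v)
      + 42336000 * Real.cos (6 * v))
    / (103219200 * v ^ 2 * (Real.sin (v / 2)) ^ 10)

/-- The variable coefficient `b₆(v)` of the phase-fitted method PF-D0. -/
noncomputable def pfb6 (v : ℝ) : ℝ :=
  (((-171873114) * Real.cos v + 171835152 * Real.cos (2 * v)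
        - 257184477 * Real.cos (3 * v) + 103937264 * Real.cos (4 * v)
        - 75329225 * Real.cos (5 * v)) * v ^ 2
      + 50803200 * (Real.cos (3 * v) - 2 * Real.cos (4 * v)
        + 2 * Real.cos (5 * v) - Real.cos (6 * v)))
    / (103219200 * v ^ 2 * (Real.sin (v / 2)) ^ 10)

set_option maxHeartbeats 2000000
set_option maxRecDepth 8000

noncomputable section

def polyW (x T : ℝ) : ℝ :=
  (((1253984311/11088) + x*((-3599296651/66528) + x*((49556823731/3991680) +
    x*((-76397291959/41912640) + x*((121869998557/632282112) + x*((-13871599838267/885194956800) +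
    x*((8438214845521/8261819596800) + x*((-735356223455099/13384147746816000) +
    x*((11372747184581/4562777640960000) + x*((-1712726361719521/17667075025797120000) +
    x*((291582251364234157/89042058130017484800000) + x*((-829544667328759/8548037580481678540800) +
    x*((1109225349957341/436124366351106048000000) + x*((-507016157690663/8548037580481678540800000)
    + x*((4395151199729857543/3554274025964281937264640000000) +
    x*((-493097459385237881/21325644155785691623587840000000) +
    x*((33144581442595453/85302576623142766494351360000000) +
    x*((-250472153501099/42651288311571383247175680000000) +
    x*((105017111228047/1316096896471345540198563840000000) +
    x*((-3697717514038633/3800229788561010247323353088000000000) +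
    x*((193608012691171/18241102985092849187152094822400000000) +
    x*((-22555890803189/218893235821114190245825137868800000000) +
    x*((4643565098857/5253437659706740565899803308851200000000) +
    x*((-1044854366551/157603129791202216976994099265536000000000) +
    x*((891184096427/20803613132438692640963221103050752000000000) +
    x*((-8513/36482205970185698374304189644800000000) +
    x*((1021/985019561195013856106213120409600000000) +
    x*((-1/281434160341432530316060891545600000000) +
    x*((1/118202347343401662732745574449152000000000) +
    x*(-1/93616259095974116884334494963728384000000000)))))))))))))))))))))))))))))) + T*((36288000
    + x*((-154224000) + x*(230126400 + x*((-164928600) + x*(66059100 + x*((-182067005/11) +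
    x*((3865498121/924) + x*((-1832989999/2079) + x*((26314082441/199584) +
    x*((-394115527867/27941760) + x*((4163601221737/3688312320) + x*((-93498356122943/1327792435200)
    + x*((447160454117/126456422400) + x*((-980908777117961/6692073873408000) +
    x*((16296101364359/3186701844480000) + x*((-4039441827714613/26500612538695680000) +
    x*((1040567148807437/265006125386956800000) + x*((-47101215650932343/534252348780104908800000) +
    x*((1390992434882461/801378523170157363200000) + x*((-48209100608063/1602757046340314726400000)
    + x*((1190549938381/2590578736125569925120000) +
    x*((-471350081135557/76163014842091755798528000000) +
    x*((797135064217/10880430691727393685504000000) +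
    x*((-43327888811/57122261131568816848896000000) +
    x*((112034030891/16451211205891819252482048000000) +
    x*((-2273081907031/43431197583554402826552606720000000) +
    x*((9641/28561130565784408424448000000) + x*((-607/342733566789412901093376000000) +
    x*((59/8225605602945909626241024000000) + x*((-1/49353633617675457757446144000000) +
    x*(1/32573398187665802119914455040000000))))))))))))))))))))))))))))))) +
    T*((x*(x*(x*(x*(x*(x*(x*((-314496000) + x*(893390400 + x*((-874731600) + x*(400267380 +
    x*((-3324471820/33) + x*((20860157509/924) + x*((-1733110481/462) + x*((424100487409/997920) +
    x*((-13551774373/399168) + x*((114471133571/56918400) + x*((-61207110243721/663896217600) +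
    x*((44886807012391/13277924352000) + x*((-899929954799/8851949568000) +
    x*((3107460949567/1216740704256000) + x*((-15982596834271/294451250429952000) +
    x*((10429359035857/10600245015478272000) + x*((-7284221006171/477011025696522240000) +
    x*((774491516087/3816088205572177920000) + x*((-52665920171/22896529233433067520000) +
    x*((199698299051/9067025576439494737920000) + x*((-41807/238505512848261120000) +
    x*((269/238505512848261120000) + x*((-1/178879134636195840000) + x*((1/51517190775224401920000)
    + x*(-1/27201076729318484213760000)))))))))))))))))))))))))))))))) +
    T*((x*(x*(x*(x*(x*(x*(x*(x*(x*(x*(x*(x*(x*(x*(919296000 + x*((-1667762400) + x*(981758240 +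
    x*((-2787148620/11) + x*((5214478466/99) + x*((-18928753073/2772) + x*((4194110801/7560) +
    x*((-13069247669/427680) + x*((5363728855/4390848) + x*((-30545712721/819624960) +
    x*((179012669797/199168865280) + x*((-104641036463/5975065958400) +
    x*((19977774251/71700791500800) + x*((-68625213611/18929008956211200) + x*((1907/49792216320) +
    x*((-103/320092819200) + x*((37/17925197875200) + x*((-1/107551187251200) +
    x*(1/42590270151475200))))))))))))))))))))))))))))))))) +
    T*((x*(x*(x*(x*(x*(x*(x*(x*(x*(x*(x*(x*(x*(x*(x*(x*(x*(x*(x*(x*(x*((-1161216000) + x*(1200511120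
    + x*((-11303185100/33) + x*((6152196275/99) + x*((-3185095255/594) + x*((8622439255/33264) +
    x*((-4862727851/598752) + x*((14279060651/79035264) + x*((-695/231) + x*((235/6237) +
    x*((-13/37422) + x*((1/449064) + x*(-1/118552896)))))))))))))))))))))))))))))))))) + T*((x*(x*(x
    *(x*(x*(x*(x*(x*(x*(x*(x*(x*(x*(x*(x*(x*(x*(x*(x*(x*(x*(x*(x*(x*(x*(x*(x*(x*(645120000 +
    x*((-9133882040/33) + x*(32256000 + x*((-1075200) + x*(19200 + x*((-640/3) +
    x*(160/99))))))))))))))))))))))))))))))))))) + T*(x*(x*(x*(x*(x*(x*(x*(x*(x*(x*(x*(x*(x*(x*(x*(x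
    *(x*(x*(x*(x*(x*(x*(x*(x*(x*(x*(x*(x*(x*(x*(x*(x*(x*(x*(x*(-
    129024000))))))))))))))))))))))))))))))))))))))))))

def polyP (x t : ℝ) : ℝ :=
  x*((-18144000) + 160272000*(x*t) + (-485553600)*(x*t)^2 + 654669600*(x*t)^3
      + (-412288880)*(x*t)^4 + 82457776*(x*t)^5)
    + (36288000*(x*t) + (-314496000)*(x*t)^2 + 919296000*(x*t)^3 + (-1161216000)*(x*t)^4
      + 645120000*(x*t)^5 + (-129024000)*(x*t)^6)
    - 6451200*(-114798419/26611200)*x*(x*t)^5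

def polyQ (x : ℝ) : ℝ :=
  1/2 - x/24 + x^2/720 - x^3/40320 + x^4/3628800 - x^5/479001600

theorem keyW (x T : ℝ) : polyP x (polyQ x + x^6*T) = x^7 * polyW x T := by
  simp only [polyP, polyQ, polyW]
  ring

theorem polyW_continuous : Continuous (fun p : ℝ × ℝ => polyW p.1 p.2) := by
  simp only [polyW]
  fun_prop

theorem polyW_value : polyW 0 (1/87178291200) / (6451200 * (1/2:ℝ)^5)
    = 16301796103/29059430400 := by
  norm_num [polyW]

section CosTaylor
open Complex Finset

theorem cos_taylor16 {v : ℝ} (hv : |v| ≤ 1) :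
    |Real.cos v - (1 - v^2/2 + v^4/24 - v^6/720 + v^8/40320 - v^10/3628800 + v^12/479001600
      - v^14/87178291200)| ≤ |v|^16 := by
  set E : ℝ := 1 - v^2/2 + v^4/24 - v^6/720 + v^8/40320 - v^10/3628800 + v^12/479001600
      - v^14/87178291200 with hE
  have p2 : (I:ℂ)^2 = -1 := I_sq
  have p3 : (I:ℂ)^3 = -I := by rw [pow_succ, p2]; ring
  have p4 : (I:ℂ)^4 = 1 := by rw [pow_succ, p3]; simp [I_mul_I]
  have p5 : (I:ℂ)^5 = I := by rw [pow_succ, p4]; ring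
  have p6 : (I:ℂ)^6 = -1 := by rw [pow_succ, p5, I_mul_I]
  have p7 : (I:ℂ)^7 = -I := by rw [pow_succ, p6]; ring
  have p8 : (I:ℂ)^8 = 1 := by rw [pow_succ, p7]; simp [I_mul_I]
  have p9 : (I:ℂ)^9 = I := by rw [pow_succ, p8]; ring
  have p10 : (I:ℂ)^10 = -1 := by rw [pow_succ, p9, I_mul_I]
  have p11 : (I:ℂ)^11 = -I := by rw [pow_succ, p10]; ring
  have p12 : (I:ℂ)^12 = 1 := by rw [pow_succ, p11]; simp [I_mul_I]
  have p13 : (I:ℂ)^13 = I := by rw [pow_succ, p12]; ring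
  have p14 : (I:ℂ)^14 = -1 := by rw [pow_succ, p13, I_mul_I]
  have p15 : (I:ℂ)^15 = -I := by rw [pow_succ, p14]; ring
  have hsum : (∑ m ∈ range 16, ((v:ℂ)*I)^m/m.factorial)
      + (∑ m ∈ range 16, (-(v:ℂ)*I)^m/m.factorial) = 2*(E:ℂ) := by
    rw [hE]
    simp only [Finset.sum_range_succ, Finset.range_zero, Finset.sum_empty, mul_pow,
      Nat.factorial]
    push_cast
    simp only [p2, p3, p4, p5, p6, p7, p8, p9, p10, p11, p12, p13, p14, p15, pow_zero, pow_one]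
    ring
  have hd : Complex.cos v - (E:ℂ) =
      ((Complex.exp ((v:ℂ)*I) - ∑ m ∈ range 16, ((v:ℂ)*I)^m/m.factorial)
       + (Complex.exp (-(v:ℂ)*I) - ∑ m ∈ range 16, (-(v:ℂ)*I)^m/m.factorial))/2 := by
    rw [Complex.cos]
    linear_combination hsum/2
  have habs : ‖(v:ℂ)*I‖ ≤ 1 := by
    simpa [norm_mul, Complex.norm_I, Complex.norm_real] using hv
  have habs' : ‖-(v:ℂ)*I‖ ≤ 1 := by
    simpa [norm_mul, Complex.norm_I, Complex.norm_real] using hv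
  have b1 := Complex.exp_bound habs (n := 16) (by norm_num)
  have b2 := Complex.exp_bound habs' (n := 16) (by norm_num)
  have habseq : ‖(v:ℂ)*I‖ = |v| := by
    simp [norm_mul, Complex.norm_I, Complex.norm_real]
  have habseq' : ‖-(v:ℂ)*I‖ = |v| := by
    simp [norm_mul, Complex.norm_I, Complex.norm_real]
  rw [habseq] at b1; rw [habseq'] at b2
  have key : |Real.cos v - E| = ‖Complex.cos v - (E:ℂ)‖ := by
    rw [← Real.norm_eq_abs, ← Complex.norm_real]
    congr 1
    push_cast [Complex.ofReal_cos]
    ring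
  rw [key, hd]
  calc ‖((Complex.exp ((v:ℂ)*I) - ∑ m ∈ range 16, ((v:ℂ)*I)^m/m.factorial)
       + (Complex.exp (-(v:ℂ)*I) - ∑ m ∈ range 16, (-(v:ℂ)*I)^m/m.factorial))/2‖
      ≤ (‖Complex.exp ((v:ℂ)*I) - ∑ m ∈ range 16, ((v:ℂ)*I)^m/m.factorial‖
        + ‖Complex.exp (-(v:ℂ)*I) - ∑ m ∈ range 16, (-(v:ℂ)*I)^m/m.factorial‖)/2 := by
        rw [norm_div]
        simp only [Complex.norm_two]
        gcongr
        exact norm_add_le _ _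
    _ ≤ (|v|^16 * ((17:ℝ) * ((Nat.factorial 16 : ℝ) * 16)⁻¹)
         + |v|^16 * ((17:ℝ) * ((Nat.factorial 16 : ℝ) * 16)⁻¹))/2 := by
        gcongr <;> [exact b1; exact b2]
    _ ≤ |v|^16 := by
        rw [Nat.factorial]
        norm_num [Nat.factorial]
        nlinarith [pow_nonneg (abs_nonneg v) 16]

end CosTaylor

noncomputable def auxT (v : ℝ) : ℝ :=
  (1 - Real.cos v - (v^2/2 - v^4/24 + v^6/720 - v^8/40320 + v^10/3628800 - v^12/479001600))/v^14

noncomputable def auxt (v : ℝ) : ℝ := (1 - Real.cos v)/v^2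


theorem auxT_tendsto :
    Tendsto auxT (nhdsWithin 0 (Set.Ioi 0)) (nhds (1/87178291200)) := by
  rw [← tendsto_sub_nhds_zero_iff]
  have hmem : Set.Ioo (0:ℝ) 1 ∈ nhdsWithin (0:ℝ) (Set.Ioi 0) :=
    Ioo_mem_nhdsGT_of_mem (by constructor <;> norm_num)
  apply squeeze_zero_norm' (a := fun v => v^2)
  · filter_upwards [hmem] with v hv
    obtain ⟨h0, h1⟩ := hv
    have hva : |v| ≤ 1 := by rw [abs_of_pos h0]; linarith
    have hb := cos_taylor16 hva
    have hv14 : (0:ℝ) < v^14 := by positivity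
    rw [Real.norm_eq_abs]
    have heq : auxT v - 1/87178291200 =
        -(Real.cos v - (1 - v^2/2 + v^4/24 - v^6/720 + v^8/40320 - v^10/3628800 + v^12/479001600
      - v^14/87178291200))/v^14 := by
      rw [auxT]; field_simp; ring
    rw [heq, abs_div, abs_neg, abs_of_pos hv14]
    rw [div_le_iff₀ hv14]
    calc |Real.cos v - _| ≤ |v|^16 := hb
      _ = v^2 * v^14 := by rw [abs_of_pos h0]; ring
  · have : Tendsto (fun v : ℝ => v^2) (nhds 0) (nhds 0) := by
      have := (continuous_pow 2 (M := ℝ)).tendsto 0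
      simpa using this
    exact this.mono_left nhdsWithin_le_nhds

theorem auxt_eq {v : ℝ} (hv : v ≠ 0) :
    auxt v = (1/2 - v^2/24 + (v^2)^2/720 - (v^2)^3/40320 + (v^2)^4/3628800 - (v^2)^5/479001600)
      + v^12 * auxT v := by
  rw [auxt, auxT]
  field_simp
  ring

theorem auxt_tendsto :
    Tendsto auxt (nhdsWithin 0 (Set.Ioi 0)) (nhds (1/2)) := by
  have h1 : Tendsto (fun v : ℝ =>
      (1/2 - v^2/24 + (v^2)^2/720 - (v^2)^3/40320 + (v^2)^4/3628800 - (v^2)^5/479001600)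
      + v^12 * auxT v) (nhdsWithin 0 (Set.Ioi 0)) (nhds (1/2)) := by
    have hpoly : Tendsto (fun v : ℝ =>
        (1/2 - v^2/24 + (v^2)^2/720 - (v^2)^3/40320 + (v^2)^4/3628800 - (v^2)^5/479001600))
        (nhdsWithin 0 (Set.Ioi 0)) (nhds (1/2)) := by
      have hc : Continuous (fun v : ℝ =>
          (1/2 - v^2/24 + (v^2)^2/720 - (v^2)^3/40320 + (v^2)^4/3628800 - (v^2)^5/479001600)) := by
        fun_prop
      have := hc.tendsto 0
      norm_num at this
      exact this.mono_left nhdsWithin_le_nhds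
    have hv12 : Tendsto (fun v : ℝ => v^12) (nhdsWithin (0:ℝ) (Set.Ioi 0)) (nhds 0) := by
      have h := (continuous_pow 12 (M := ℝ)).tendsto 0
      norm_num at h
      exact h.mono_left nhdsWithin_le_nhds
    have := hpoly.add (hv12.mul auxT_tendsto)
    simpa using this
  apply h1.congr'
  filter_upwards [self_mem_nhdsWithin] with v hv
  exact (auxt_eq (ne_of_gt hv)).symm

theorem pfb2_identity {v : ℝ} (hv : v ∈ Set.Ioo (0:ℝ) 1) :
    pfb2 v - (-114798419 / 26611200) =
      v^2 * (polyW (v^2) (auxT v) / (6451200 * (auxt v)^5)) := by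
  obtain ⟨h0, h1⟩ := hv
  have hv0 : v ≠ 0 := ne_of_gt h0
  have hc1 : Real.cos v < 1 := by
    have hle := Real.cos_le_one v
    rcases lt_or_eq_of_le hle with h | h
    · exact h
    · exfalso
      have hpi := Real.pi_gt_three
      have := (Real.cos_eq_one_iff_of_lt_of_lt (x := v) (by linarith) (by linarith)).1 h
      exact hv0 this
  have hw : (0:ℝ) < 1 - Real.cos v := by linarith
  set c := Real.cos v with hc
  have h2 : Real.cos (2*v) = 2*c^2 - 1 := Real.cos_two_mul v
  have h3 : Real.cos (3*v) = 4*c^3 - 3*c := Real.cos_three_mul v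
  have h4 : Real.cos (4*v) = 8*c^4 - 8*c^2 + 1 := by
    have h := Real.cos_two_mul (2*v)
    rw [show 2*(2*v) = 4*v by ring, h2] at h
    rw [h]; ring
  have h6 : Real.cos (6*v) = 32*c^6 - 48*c^4 + 18*c^2 - 1 := by
    have h := Real.cos_two_mul (3*v)
    rw [show 2*(3*v) = 6*v by ring, h3] at h
    rw [h]; ring
  have hs2 : Real.sin v^2 = 1 - c^2 := Real.sin_sq v
  have h5 : Real.cos (5*v) = 16*c^5 - 20*c^3 + 5*c := by
    have h := Real.cos_add (2*v) (3*v)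
    rw [show 2*v + 3*v = 5*v by ring] at h
    rw [h, h2, h3, Real.sin_two_mul, Real.sin_three_mul, ← hc]
    linear_combination (8*c*(Real.sin v^2 + 1 - c^2) - 6*c) * hs2
  have hsin : Real.sin (v/2)^10 = ((1-c)/2)^5 := by
    have hh : Real.sin (v/2)^2 = (1-c)/2 := by
      have h := Real.cos_two_mul (v/2)
      rw [show 2*(v/2) = v by ring] at h
      have hp := Real.sin_sq_add_cos_sq (v/2)
      rw [hc]
      linarith [h, hp]
    calc Real.sin (v/2)^10 = (Real.sin (v/2)^2)^5 := by ring
      _ = ((1-c)/2)^5 := by rw [hh]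
  have e1 : pfb2 v =
      (v^2*((-18144000) + 160272000*(1-c) + (-485553600)*(1-c)^2 + 654669600*(1-c)^3
        + (-412288880)*(1-c)^4 + 82457776*(1-c)^5)
       + (36288000*(1-c) + (-314496000)*(1-c)^2 + 919296000*(1-c)^3 + (-1161216000)*(1-c)^4
        + 645120000*(1-c)^5 + (-129024000)*(1-c)^6))
      / (6451200 * v^2 * (1-c)^5) := by
    rw [pfb2, hsin, h2, h3, h4, h5, h6, ← hc]
    rw [div_eq_div_iff (by positivity) (by positivity)]
    ring
  have hPt : polyP (v^2) (auxt v) =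
      v^2*((-18144000) + 160272000*(1-c) + (-485553600)*(1-c)^2 + 654669600*(1-c)^3
        + (-412288880)*(1-c)^4 + 82457776*(1-c)^5)
       + (36288000*(1-c) + (-314496000)*(1-c)^2 + 919296000*(1-c)^3 + (-1161216000)*(1-c)^4
        + 645120000*(1-c)^5 + (-129024000)*(1-c)^6)
      - 6451200*(-114798419/26611200)*v^2*(1-c)^5 := by
    simp only [polyP, auxt, ← hc]
    field_simp
  have hq : polyQ (v^2) + (v^2)^6 * auxT v = auxt v := by
    rw [polyQ, auxt_eq hv0]; ring
  have hPw : polyP (v^2) (auxt v) = v^14 * polyW (v^2) (auxT v) := by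
    have h := keyW (v^2) (auxT v)
    rw [hq] at h
    rw [h]; ring
  have key : v^2*((-18144000) + 160272000*(1-c) + (-485553600)*(1-c)^2 + 654669600*(1-c)^3
        + (-412288880)*(1-c)^4 + 82457776*(1-c)^5)
       + (36288000*(1-c) + (-314496000)*(1-c)^2 + 919296000*(1-c)^3 + (-1161216000)*(1-c)^4
        + 645120000*(1-c)^5 + (-129024000)*(1-c)^6)
      - 6451200*(-114798419/26611200)*v^2*(1-c)^5 = v^14 * polyW (v^2) (auxT v) := by
    rw [← hPt, hPw]
  have h1c : (1:ℝ)-c ≠ 0 := ne_of_gt hw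
  have hrhs : v^2 * (polyW (v^2) (auxT v) / (6451200 * (auxt v)^5)) =
      (v^14 * polyW (v^2) (auxT v)) / (6451200 * v^2 * (1-c)^5) := by
    rw [auxt, ← hc]
    field_simp
  rw [e1, hrhs, ← key]
  field_simp

end

/-- The PF-D0 coefficient `pfb2` tends to the corresponding classical
Quinlan–Tremaine coefficient as `v → 0⁺`, with the stated `v²`-Taylor coefficient. -/
theorem pfd0_b2_limit :
    Tendsto pfb2 (nhdsWithin 0 (Set.Ioi 0)) (nhds (-114798419 / 26611200)) ∧
    Tendsto (fun v : ℝ => (pfb2 v - (-114798419 / 26611200)) / v ^ 2)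
      (nhdsWithin 0 (Set.Ioi 0)) (nhds (16301796103 / 29059430400)) := by
  have hmem : Set.Ioo (0:ℝ) 1 ∈ nhdsWithin (0:ℝ) (Set.Ioi 0) :=
    Ioo_mem_nhdsGT_of_mem (by constructor <;> norm_num)
  have hsq : Tendsto (fun v : ℝ => v^2) (nhdsWithin 0 (Set.Ioi 0)) (nhds 0) := by
    have h := (continuous_pow 2 (M := ℝ)).tendsto 0
    norm_num at h
    exact h.mono_left nhdsWithin_le_nhds
  have hWt : Tendsto (fun v : ℝ => polyW (v^2) (auxT v)) (nhdsWithin 0 (Set.Ioi 0))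
      (nhds (polyW 0 (1/87178291200))) := by
    have hpair : Tendsto (fun v : ℝ => ((v^2 : ℝ), auxT v)) (nhdsWithin 0 (Set.Ioi 0))
        (nhds ((0 : ℝ), (1/87178291200 : ℝ))) := hsq.prodMk_nhds auxT_tendsto
    exact (polyW_continuous.tendsto ((0 : ℝ), (1/87178291200 : ℝ))).comp hpair
  have hden : Tendsto (fun v : ℝ => 6451200 * (auxt v)^5) (nhdsWithin 0 (Set.Ioi 0))
      (nhds (6451200 * (1/2:ℝ)^5)) := tendsto_const_nhds.mul (auxt_tendsto.pow 5)
  have hg : Tendsto (fun v : ℝ => polyW (v^2) (auxT v) / (6451200 * (auxt v)^5))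
      (nhdsWithin 0 (Set.Ioi 0))
      (nhds ((16301796103 : ℝ)/29059430400)) := by
    have h := hWt.div hden (by norm_num)
    rwa [polyW_value] at h
  constructor
  · have h1 : Tendsto (fun v : ℝ => (-114798419 / 26611200 : ℝ)
        + v^2 * (polyW (v^2) (auxT v) / (6451200 * (auxt v)^5)))
        (nhdsWithin 0 (Set.Ioi 0)) (nhds (-114798419 / 26611200)) := by
      have h2 := (tendsto_const_nhds (x := (-114798419 / 26611200 : ℝ))
          (f := nhdsWithin (0:ℝ) (Set.Ioi 0))).add (hsq.mul hg)
      convert h2 using 2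
      norm_num
    apply h1.congr'
    filter_upwards [hmem] with v hv
    linarith [pfb2_identity hv]
  · apply hg.congr'
    filter_upwards [hmem] with v hv
    rw [pfb2_identity hv]
    exact (mul_div_cancel_left₀ _ (pow_ne_zero 2 (ne_of_gt hv.1))).symm
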